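/- Let A ⊆ ℕ be a recursively enumerable set that is not computable, enumerated without repetitions by a total computable injective function a : ℕ → ℕ with range A, let ν(j) = μn[a(n) = j] be the waiting-time function, and define β : ℕ → ℕ by β(J) = max{ν(j) : j < J and j ∈ A}, with max ∅ = 0. Then β majorizes every computable function infinitely often: for every total computable function f : ℕ → ℕ, the set {J ∈ ℕ : f(J) < β(J)} is infinite. -/

import Mathlib

/-- The waiting-time function `ν(j) = μn[a(n) = j]`: the unbounded `μ`-search
(`Nat.rfind`) for the least `n` with `a n = j`. -/
def nu (a : ℕ → ℕ) (j : ℕ) : Part ℕ :=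
  Nat.rfind fun n => Part.some (decide (a n = j))

open Classical in
/-- `β(J) = max {ν(j) : j < J ∧ j ∈ A}`, with the convention `max ∅ = 0`
(note `Finset.sup` over `ℕ` takes value `0` on the empty set). -/
noncomputable def beta (a : ℕ → ℕ) (A : Set ℕ) (J : ℕ) : ℕ :=
  (Finset.range J).sup fun j => if j ∈ A then (nu a j).getOrElse 0 else 0

/-- Bounded search `∃ n ≤ k, a n = j` as a Bool. -/
def bfind (a : ℕ → ℕ) (j : ℕ) : ℕ → Bool
  | 0 => a 0 == j
  | k + 1 => cond (bfind a j k) true (a (k + 1) == j)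

theorem bfind_iff (a : ℕ → ℕ) (j k : ℕ) :
    bfind a j k = true ↔ ∃ n ≤ k, a n = j := by
  induction k with
  | zero =>
    simp only [bfind, Nat.le_zero, beq_iff_eq]
    constructor
    · intro h; exact ⟨0, rfl, h⟩
    · rintro ⟨n, rfl, h⟩; exact h
  | succ m ih =>
    simp only [bfind]
    cases hb : bfind a j m with
    | true =>
      simp only [cond_true, true_iff]
      obtain ⟨n, hn, h⟩ := ih.1 hb
      exact ⟨n, hn.trans (Nat.le_succ m), h⟩
    | false =>
      simp only [cond_false, beq_iff_eq]
      constructor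
      · intro h; exact ⟨m + 1, le_rfl, h⟩
      · rintro ⟨n, hn, h⟩
        rcases Nat.lt_succ_iff_lt_or_eq.1 (Nat.lt_succ_of_le hn) with h' | rfl
        · exact absurd (ih.2 ⟨n, Nat.lt_succ_iff.1 h', h⟩) (by simp [hb])
        · exact h

theorem bfind_computable {a : ℕ → ℕ} (ha : Computable a) :
    Computable₂ (bfind a) := by
  have h1 : Computable fun p : ℕ × ℕ =>
      Nat.rec (motive := fun _ => Bool) (a 0 == p.1)
        (fun m ih => cond ih true (a (m + 1) == p.1)) p.2 :=
    Computable.nat_rec Computable.snd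
      ((Primrec.beq.to_comp : Computable₂ _).comp (ha.comp (Computable.const 0)) Computable.fst)
      (Computable.cond (Computable.snd.comp Computable.snd)
        (Computable.const true)
        ((Primrec.beq.to_comp : Computable₂ _).comp
          (ha.comp (Computable.succ.comp (Computable.fst.comp Computable.snd)))
          (Computable.fst.comp Computable.fst))).to₂
  have h2 : ∀ p : ℕ × ℕ, (fun p : ℕ × ℕ =>
      Nat.rec (motive := fun _ => Bool) (a 0 == p.1)
        (fun m ih => cond ih true (a (m + 1) == p.1)) p.2) p = bfind a p.1 p.2 := by
    rintro ⟨j, k⟩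
    induction k with
    | zero => rfl
    | succ m ih => simp only [bfind, ← ih]
  exact (h1.of_eq h2).to₂

/-- If `A` is r.e. but not computable, enumerated without
repetitions by the total computable injective `a` with range `A`, then `β`
majorizes every computable function infinitely often: for every total
computable `f : ℕ → ℕ`, the set `{J : f J < β J}` is infinite. -/
theorem beta_majorizes_computable_infinitely_often (A : Set ℕ) (a : ℕ → ℕ)
    (ha : Computable a) (hinj : Function.Injective a)
    (hrange : Set.range a = A) (hre : REPred (· ∈ A))
    (hnc : ¬ ComputablePred (· ∈ A)) :
    ∀ f : ℕ → ℕ, Computable f → {J : ℕ | f J < beta a A J}.Infinite := by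
  intro f hf
  classical
  by_contra hfin
  rw [Set.not_infinite] at hfin
  obtain ⟨N, hN⟩ := hfin.bddAbove
  -- for J > N, β J ≤ f J
  have hbound : ∀ J, N < J → beta a A J ≤ f J := by
    intro J hJ
    by_contra h
    exact absurd (hN (Set.mem_setOf.2 (Nat.lt_of_not_le h))) (Nat.not_le.2 hJ)
  -- key: j ∈ A ↔ ∃ n ≤ f (max (j+1) (N+1)), a n = j
  have key : ∀ j : ℕ, j ∈ A ↔ bfind a j (f (max (j + 1) (N + 1))) = true := by
    intro j
    rw [bfind_iff]
    constructor
    · intro hjA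
      have hjJ : j < max (j + 1) (N + 1) := lt_of_lt_of_le (Nat.lt_succ_self j) (le_max_left _ _)
      have hNJ : N < max (j + 1) (N + 1) := lt_of_lt_of_le (Nat.lt_succ_self N) (le_max_right _ _)
      obtain ⟨n, hn⟩ := hrange ▸ hjA
      have hdom : (nu a j).Dom := by
        rw [nu]; refine Nat.rfind_dom.2 ?_
        exact ⟨n, by simp [hn], fun {_} _ => trivial⟩
      obtain ⟨n₀, hmem⟩ := Part.dom_iff_mem.1 hdom
      have han₀ : a n₀ = j := by simpa using Nat.rfind_spec hmem
      have hget : (nu a j).getOrElse 0 = n₀ := by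
        rw [Part.getOrElse_of_dom _ hdom]
        exact Part.get_eq_of_mem hmem hdom
      have hle : n₀ ≤ beta a A (max (j + 1) (N + 1)) := by
        rw [beta]
        have := Finset.le_sup (f := fun j => if j ∈ A then (nu a j).getOrElse 0 else 0)
          (Finset.mem_range.2 hjJ)
        refine le_trans ?_ this
        simp only [hjA, if_true, hget, le_refl]
      exact ⟨n₀, hle.trans (hbound _ hNJ), han₀⟩
    · rintro ⟨n, _, hn⟩
      exact hrange ▸ ⟨n, hn⟩
  apply hnc
  rw [ComputablePred.computable_iff]
  refine ⟨fun j => bfind a j (f (max (j + 1) (N + 1))), ?_, ?_⟩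
  · exact (bfind_computable ha).comp Computable.id
      (hf.comp (Primrec.nat_max.to_comp.comp (Computable.succ.comp Computable.id) (Computable.const (N + 1))))
  · funext j
    exact propext ((key j).trans (by simp))
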